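/- Let p ≥ 7 be a prime and a, b integers such that all roots of h(X) = X^4 + a*sqrt(p)*X^3 + b*X^2 + a*sqrt(p)*X + 1 lie on the unit circle. Then a = 0 and b ∈ {-2, -1, 0, 1, 2}; equivalently, the polynomial Φ(x) = x^4 + p*a*x^3 + p*b*x^2 + p^2*a*x + p^2 is one of (x^2 - p)^2, (x^2 + p)^2, x^4 + p^2, x^4 - p*x^2 + p^2, x^4 + p*x^2 + p^2. -/

import Mathlib

set_option maxHeartbeats 1000000 in
theorem stmt_2 (p : ℕ) (hp : p.Prime) (hp7 : 7 ≤ p) (a b : ℤ)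
    (hroots : ∀ z : ℂ,
      z ^ 4 + (a : ℂ) * (Real.sqrt p : ℂ) * z ^ 3 + (b : ℂ) * z ^ 2
        + (a : ℂ) * (Real.sqrt p : ℂ) * z + 1 = 0 → ‖z‖ = 1) :
    a = 0 ∧ (b = -2 ∨ b = -1 ∨ b = 0 ∨ b = 1 ∨ b = 2) := by
  set s : ℝ := Real.sqrt p with hsdef
  have hs0 : 0 ≤ s := Real.sqrt_nonneg _
  have hs2 : s ^ 2 = (p : ℝ) := Real.sq_sqrt (by positivity)
  have hp7R : (7 : ℝ) ≤ (p : ℝ) := by exact_mod_cast hp7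
  -- Key: every complex root of w² + a√p w + (b-2) is real with |w| ≤ 2
  have key : ∀ w : ℂ, w ^ 2 + (a : ℂ) * (s : ℂ) * w + ((b : ℂ) - 2) = 0 →
      ∃ x : ℝ, w = (x : ℂ) ∧ |x| ≤ 2 := by
    intro w hq
    obtain ⟨σ, hσ⟩ := IsAlgClosed.exists_pow_nat_eq (w ^ 2 - 4) zero_lt_two
    set z : ℂ := (w + σ) / 2 with hzdef
    have hz : z ^ 2 - w * z + 1 = 0 := by
      rw [hzdef]; linear_combination (1 / 4 : ℂ) * hσ
    have hz1 : z * ((w - σ) / 2) = 1 := by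
      rw [hzdef]; linear_combination (-(1 : ℂ) / 4) * hσ
    have hz0 : z ≠ 0 := left_ne_zero_of_mul_eq_one hz1
    have habs : ‖z‖ = 1 := by
      apply hroots
      linear_combination (z ^ 2 + w * z + (a : ℂ) * (s : ℂ) * z + 1) * hz + z ^ 2 * hq
    have hzz : z * (starRingEnd ℂ) z = 1 := by
      rw [Complex.mul_conj]
      norm_cast
      rw [Complex.normSq_eq_norm_sq, habs]; norm_num
    have hw : w = z + (starRingEnd ℂ) z := by
      apply mul_right_cancel₀ hz0
      linear_combination (-1 : ℂ) * hz - hzz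
    refine ⟨2 * z.re, ?_, ?_⟩
    · rw [hw, Complex.add_conj]
    · have := Complex.abs_re_le_norm z
      rw [habs] at this
      rw [abs_mul]
      simpa using by linarith [abs_nonneg z.re, this]
  have hsC : ((s : ℂ)) ^ 2 = (p : ℂ) := by exact_mod_cast congrArg (fun x : ℝ => (x : ℂ)) hs2
  have e1 : (a * s) ^ 2 = (a : ℝ) ^ 2 * p := by rw [mul_pow, hs2]
  -- discriminant is nonnegative
  have hD : 0 ≤ (a : ℝ) ^ 2 * p - 4 * b + 8 := by
    by_contra hcon
    push_neg at hcon
    set u : ℝ := Real.sqrt (-((a : ℝ) ^ 2 * p - 4 * b + 8)) with hudef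
    have hu2 : u ^ 2 = -((a : ℝ) ^ 2 * p - 4 * b + 8) := Real.sq_sqrt (by linarith)
    have hu0 : 0 < u := Real.sqrt_pos.mpr (by linarith)
    have huC : ((u : ℂ)) ^ 2 = -(((a : ℂ)) ^ 2 * p - 4 * b + 8) := by
      exact_mod_cast congrArg (fun x : ℝ => (x : ℂ)) hu2
    have hq : ((-(a * s) / 2 : ℝ) + (u / 2 : ℝ) * Complex.I) ^ 2
        + (a : ℂ) * (s : ℂ) * ((-(a * s) / 2 : ℝ) + (u / 2 : ℝ) * Complex.I)
        + ((b : ℂ) - 2) = 0 := by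
      push_cast
      linear_combination (-(a : ℂ) ^ 2 / 4) * hsC + (((u : ℂ)) ^ 2 / 4) * Complex.I_sq
        + (-(1 : ℂ) / 4) * huC
    obtain ⟨x, hx, -⟩ := key _ hq
    have him : u / 2 = 0 := by simpa using congrArg Complex.im hx
    linarith
  set t : ℝ := Real.sqrt ((a : ℝ) ^ 2 * p - 4 * b + 8) with htdef
  have ht0 : 0 ≤ t := Real.sqrt_nonneg _
  have ht2 : t ^ 2 = (a : ℝ) ^ 2 * p - 4 * b + 8 := Real.sq_sqrt hD
  -- the two real roots, bounded by 2 in absolute value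
  have hroot : ∀ r : ℝ, r ^ 2 + (a : ℝ) * s * r + ((b : ℝ) - 2) = 0 → |r| ≤ 2 := by
    intro r hr
    have hrC : ((r : ℂ)) ^ 2 + (a : ℂ) * (s : ℂ) * (r : ℂ) + ((b : ℂ) - 2) = 0 := by
      exact_mod_cast congrArg (fun x : ℝ => (x : ℂ)) hr
    obtain ⟨x, hx, hx2⟩ := key _ hrC
    have : r = x := by exact_mod_cast hx
    rwa [this]
  have hb1 : |(-(a * s) + t) / 2| ≤ 2 := by
    apply hroot; linear_combination (1/4 : ℝ) * ht2 - (1/4 : ℝ) * e1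
  have hb2 : |(-(a * s) - t) / 2| ≤ 2 := by
    apply hroot; linear_combination (1/4 : ℝ) * ht2 - (1/4 : ℝ) * e1
  rw [abs_le] at hb1 hb2
  obtain ⟨hb1l, hb1r⟩ := hb1
  obtain ⟨hb2l, hb2r⟩ := hb2
  -- now pure real arithmetic.  First: a = 0.
  have ha0 : a = 0 := by
    by_contra ha
    have ha1 : a ≤ -2 ∨ a = -1 ∨ a = 1 ∨ 2 ≤ a := by omega
    -- factors at the bound 4 - t
    have f1 : (0 : ℝ) ≤ 4 - t - a * s := by linarith
    have f2 : (0 : ℝ) ≤ 4 - t + a * s := by linarith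
    have h16 : (4 - t) ^ 2 ≤ 16 := by nlinarith
    have hsq16 : (a : ℝ) ^ 2 * p ≤ 16 := by nlinarith [mul_nonneg f1 f2, e1]
    -- hence a² = 1
    have ha2 : (a : ℝ) ^ 2 = 1 := by
      rcases ha1 with h | h | h | h
      · exfalso
        have h4 : (4 : ℝ) ≤ (a : ℝ) ^ 2 := by
          have : (4 : ℤ) ≤ a ^ 2 := by nlinarith
          exact_mod_cast this
        nlinarith
      · simp [h]
      · simp [h]
      · exfalso
        have h4 : (4 : ℝ) ≤ (a : ℝ) ^ 2 := by
          have : (4 : ℤ) ≤ a ^ 2 := by nlinarith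
          exact_mod_cast this
        nlinarith
    have e2 : (a : ℝ) ^ 2 * p = p := by rw [ha2, one_mul]
    -- q(±2) ≥ 0
    have hprod1 : (4 + a * s - t) * (4 + a * s + t) = 4 * ((b : ℝ) + 2 + 2 * (a * s)) := by
      linear_combination e1 - ht2
    have hprod2 : (4 - a * s - t) * (4 - a * s + t) = 4 * ((b : ℝ) + 2 - 2 * (a * s)) := by
      linear_combination e1 - ht2
    have hq2 : 0 ≤ (b : ℝ) + 2 + 2 * (a * s) := by
      have := mul_nonneg (by linarith : (0:ℝ) ≤ 4 + a * s - t)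
        (by linarith : (0:ℝ) ≤ 4 + a * s + t)
      linarith [hprod1 ▸ this]
    have hq2' : 0 ≤ (b : ℝ) + 2 - 2 * (a * s) := by
      have := mul_nonneg (by linarith : (0:ℝ) ≤ 4 - a * s - t)
        (by linarith : (0:ℝ) ≤ 4 - a * s + t)
      linarith [hprod2 ▸ this]
    have hsq : 4 * (p : ℝ) ≤ ((b : ℝ) + 2) ^ 2 := by
      nlinarith [mul_nonneg hq2' hq2, e1, e2]
    have hp16 : (p : ℝ) ≤ 16 := by linarith [e2 ▸ hsq16]
    have hlb : 4 * (b : ℝ) - 8 ≤ (p : ℝ) := by nlinarith [sq_nonneg t, ht2, e2]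
    -- to integers
    have hZsq : 4 * (p : ℤ) ≤ (b + 2) ^ 2 := by exact_mod_cast hsq
    have hZ16 : (p : ℤ) ≤ 16 := by exact_mod_cast hp16
    have hZlb : 4 * b - 8 ≤ (p : ℤ) := by exact_mod_cast hlb
    have hZ7 : (7 : ℤ) ≤ (p : ℤ) := by exact_mod_cast hp7
    have hZb0 : (-2 : ℤ) ≤ b := by exact_mod_cast (by linarith : (-2 : ℝ) ≤ (b : ℝ))
    have hZb6 : b ≤ 6 := by omega
    have hpv : (p : ℤ) = 8 ∨ (p : ℤ) = 9 ∨ (p : ℤ) = 12 ∨ (p : ℤ) = 16 := by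
      interval_cases b <;> omega
    have hpn : p = 8 ∨ p = 9 ∨ p = 12 ∨ p = 16 := by
      rcases hpv with h | h | h | h
      · exact Or.inl (by exact_mod_cast h)
      · exact Or.inr (Or.inl (by exact_mod_cast h))
      · exact Or.inr (Or.inr (Or.inl (by exact_mod_cast h)))
      · exact Or.inr (Or.inr (Or.inr (by exact_mod_cast h)))
    rcases hpn with h | h | h | h <;> subst h <;> norm_num at hp
  subst ha0
  refine ⟨rfl, ?_⟩
  simp only [Int.cast_zero, zero_mul] at ht2 hb1r hb2l e1
  have hble : (b : ℝ) ≤ 2 := by nlinarith [sq_nonneg t]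
  have hbge : (-2 : ℝ) ≤ (b : ℝ) := by nlinarith
  have h1 : b ≤ 2 := by exact_mod_cast hble
  have h2 : -2 ≤ b := by exact_mod_cast hbge
  omega
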